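/- For the scalar Laplacian Δ = −Σ∂²_{x_i} on the flat torus T^d = ℝ^d/2πℤ^d, the operator (1+Δ)^{-d/2} is measurable in the sense of Dixmier and Tr_ω((1+Δ)^{-d/2}) = π^{d/2}/Γ(d/2 + 1) for every Dixmier trace Tr_ω. In particular lim_{N→∞} (1/log N)Σ_{n=0}^N μ_n((1+Δ)^{-d/2}) = π^{d/2}/Γ(d/2+1). -/

import Mathlib

open scoped BigOperators
open Filter MeasureTheory Real Topology

namespace Stmt14

variable (d : ℕ)

noncomputable def cnt (t : ℝ) : Finset (Fin d → ℤ) :=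
  (Finset.Icc (fun _ => -⌈t⌉) (fun _ => ⌈t⌉)).filter
    (fun k => ∑ i, ((k i : ℝ)) ^ 2 ≤ t)

lemma mem_cnt {t : ℝ} {k : Fin d → ℤ} : k ∈ cnt d t ↔ ∑ i, ((k i : ℝ)) ^ 2 ≤ t := by
  constructor
  · intro h; exact (Finset.mem_filter.1 h).2
  · intro h
    refine Finset.mem_filter.2 ⟨Finset.mem_Icc.2 ⟨fun i => ?_, fun i => ?_⟩, h⟩ <;>
    · have h1 : ((k i : ℝ)) ^ 2 ≤ t := by
        refine le_trans ?_ h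
        exact Finset.single_le_sum (f := fun i => ((k i : ℝ))^2)
          (fun j _ => sq_nonneg _) (Finset.mem_univ i)
      have h2 : (|k i| : ℝ) ≤ t := by
        have : (|k i| : ℝ) ≤ ((k i : ℝ))^2 := by
          rcases eq_or_ne (k i) 0 with h0 | h0
          · simp [h0]
          · have h3 : (1:ℝ) ≤ |(k i : ℝ)| := by
              have := Int.one_le_abs h0
              calc (1:ℝ) = ((1:ℤ):ℝ) := by norm_num
              _ ≤ ((|k i| : ℤ) : ℝ) := by exact_mod_cast this
              _ = |(k i : ℝ)| := by push_cast; ring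
            push_cast
            nlinarith [sq_abs ((k i : ℝ))]
        exact this.trans h1
      have h4 : |k i| ≤ ⌈t⌉ := by
        have := h2.trans (Int.le_ceil t)
        exact_mod_cast this
      have := abs_le.1 h4
      simp only []; first | linarith [this.1] | linarith [this.2]

def cube (k : Fin d → ℤ) : Set (Fin d → ℝ) :=
  Set.univ.pi fun i => Set.Ico (k i : ℝ) ((k i : ℝ) + 1)

lemma volume_cube (k : Fin d → ℤ) : volume (cube d k) = 1 := by
  rw [cube, volume_pi_pi]
  simp [Real.volume_Ico]

lemma measurableSet_cube (k : Fin d → ℤ) : MeasurableSet (cube d k) :=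
  MeasurableSet.univ_pi fun i => measurableSet_Ico

lemma cube_disjoint {k k' : Fin d → ℤ} (h : k ≠ k') : Disjoint (cube d k) (cube d k') := by
  rw [Set.disjoint_left]
  rintro x hx hx'
  apply h
  funext i
  have h1 := hx i (Set.mem_univ i)
  have h2 := hx' i (Set.mem_univ i)
  have e1 : ⌊x i⌋ = k i := by
    rw [Int.floor_eq_iff]
    exact ⟨h1.1, by exact_mod_cast h1.2⟩
  have e2 : ⌊x i⌋ = k' i := by
    rw [Int.floor_eq_iff]
    exact ⟨h2.1, by exact_mod_cast h2.2⟩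
  rw [← e1, e2]

noncomputable def nrm (x : Fin d → ℝ) : ℝ := Real.sqrt (∑ i, x i ^ 2)

lemma nrm_nonneg (x : Fin d → ℝ) : 0 ≤ nrm d x := Real.sqrt_nonneg _

lemma nrm_tri (x y : Fin d → ℝ) : nrm d (x + y) ≤ nrm d x + nrm d y := by
  have hx : (0:ℝ) ≤ ∑ i, x i ^ 2 := Finset.sum_nonneg fun i _ => sq_nonneg _
  have hy : (0:ℝ) ≤ ∑ i, y i ^ 2 := Finset.sum_nonneg fun i _ => sq_nonneg _
  have hCS : (∑ i, x i * y i) ^ 2 ≤ (∑ i, x i ^ 2) * ∑ i, y i ^ 2 :=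
    Finset.sum_mul_sq_le_sq_mul_sq _ _ _
  have hxy : ∑ i, x i * y i ≤ nrm d x * nrm d y := by
    have hnn : 0 ≤ nrm d x * nrm d y := mul_nonneg (nrm_nonneg d x) (nrm_nonneg d y)
    have h2 : (nrm d x * nrm d y) ^ 2 = (∑ i, x i ^ 2) * ∑ i, y i ^ 2 := by
      rw [mul_pow, nrm, nrm, Real.sq_sqrt hx, Real.sq_sqrt hy]
    calc ∑ i, x i * y i ≤ |∑ i, x i * y i| := le_abs_self _
    _ = Real.sqrt ((∑ i, x i * y i) ^ 2) := (Real.sqrt_sq_eq_abs _).symm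
    _ ≤ Real.sqrt ((nrm d x * nrm d y) ^ 2) := Real.sqrt_le_sqrt (by rw [h2]; exact hCS)
    _ = nrm d x * nrm d y := Real.sqrt_sq hnn
  have key : ∑ i, (x + y) i ^ 2 ≤ (nrm d x + nrm d y) ^ 2 := by
    have expand : ∑ i, (x + y) i ^ 2 = (∑ i, x i ^ 2) + 2 * (∑ i, x i * y i) + ∑ i, y i ^ 2 := by
      simp only [Pi.add_apply, add_sq]
      rw [Finset.sum_add_distrib, Finset.sum_add_distrib]
      rw [show ∀ a b c : ℝ, a + b + c = a + b + c from fun _ _ _ => rfl]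
      congr 1
      · congr 1
        rw [Finset.mul_sum]
        exact Finset.sum_congr rfl fun i _ => by ring
    have h2x : nrm d x ^ 2 = ∑ i, x i ^ 2 := Real.sq_sqrt hx
    have h2y : nrm d y ^ 2 = ∑ i, y i ^ 2 := Real.sq_sqrt hy
    nlinarith [hxy]
  calc nrm d (x + y) = Real.sqrt (∑ i, (x + y) i ^ 2) := rfl
  _ ≤ Real.sqrt ((nrm d x + nrm d y) ^ 2) := Real.sqrt_le_sqrt key
  _ = nrm d x + nrm d y := Real.sqrt_sq (add_nonneg (nrm_nonneg d x) (nrm_nonneg d y))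


lemma nrm_int_le {t : ℝ} {k : Fin d → ℤ} (hk : k ∈ cnt d t) :
    nrm d (fun i => (k i : ℝ)) ≤ Real.sqrt t :=
  Real.sqrt_le_sqrt ((mem_cnt d).1 hk)

lemma nrm_le_sqrt_d {y : Fin d → ℝ} (hy : ∀ i, y i ^ 2 ≤ 1) : nrm d y ≤ Real.sqrt d := by
  refine Real.sqrt_le_sqrt ?_
  calc ∑ i, y i ^ 2 ≤ ∑ _i : Fin d, (1:ℝ) := Finset.sum_le_sum fun i _ => hy i
  _ = d := by simp

lemma cube_subset_ball {t : ℝ} {k : Fin d → ℤ} (hk : k ∈ cnt d t) :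
    cube d k ⊆ {x | nrm d x ≤ Real.sqrt t + Real.sqrt d} := by
  intro x hx
  have hsplit : x = (fun i => (k i : ℝ)) + fun i => x i - (k i : ℝ) := by
    funext i; simp
  have h1 : nrm d x ≤ nrm d (fun i => (k i : ℝ)) + nrm d (fun i => x i - (k i : ℝ)) := by
    conv_lhs => rw [hsplit]
    exact nrm_tri d _ _
  have h2 : nrm d (fun i => x i - (k i : ℝ)) ≤ Real.sqrt d := by
    refine nrm_le_sqrt_d d fun i => ?_
    have := hx i (Set.mem_univ i)
    have h3 : (0:ℝ) ≤ x i - (k i : ℝ) := by simpa using sub_nonneg.2 this.1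
    have h4 : x i - (k i : ℝ) < 1 := by linarith [this.2]
    nlinarith
  have h5 := nrm_int_le d hk
  exact le_trans h1 (by linarith)

lemma ball_subset_cubes {t : ℝ} (ht : 0 ≤ t) :
    {x | nrm d x ≤ Real.sqrt t - Real.sqrt d} ⊆ ⋃ k ∈ cnt d t, cube d k := by
  intro x hx
  set k : Fin d → ℤ := fun i => ⌊x i⌋ with hk
  have hmem : x ∈ cube d k := by
    intro i _
    exact ⟨Int.floor_le _, by exact_mod_cast Int.lt_floor_add_one (x i)⟩
  have hkc : k ∈ cnt d t := by
    rw [mem_cnt]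
    have hsplit : (fun i => (k i : ℝ)) = x + fun i => (k i : ℝ) - x i := by
      funext i; simp
    have h1 : nrm d (fun i => (k i : ℝ)) ≤ nrm d x + nrm d (fun i => (k i : ℝ) - x i) := by
      conv_lhs => rw [hsplit]
      exact nrm_tri d _ _
    have h2 : nrm d (fun i => (k i : ℝ) - x i) ≤ Real.sqrt d := by
      refine nrm_le_sqrt_d d fun i => ?_
      have hl := Int.floor_le (x i)
      have hu := Int.lt_floor_add_one (x i)
      have : -1 < (k i : ℝ) - x i := by simp only [hk]; push_cast; linarith
      have h0 : (k i : ℝ) - x i ≤ 0 := by simp only [hk]; push_cast; linarith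
      nlinarith
    have h3 : nrm d (fun i => (k i : ℝ)) ≤ Real.sqrt t := by
      have := Set.mem_setOf.1 hx
      linarith
    calc ∑ i, ((k i : ℝ)) ^ 2 = nrm d (fun i => (k i : ℝ)) ^ 2 := by
          rw [nrm, Real.sq_sqrt (Finset.sum_nonneg fun i _ => sq_nonneg _)]
    _ ≤ Real.sqrt t ^ 2 := by
          have := nrm_nonneg d (fun i => (k i : ℝ))
          nlinarith
    _ = t := Real.sq_sqrt ht
  exact Set.mem_biUnion hkc hmem

lemma volume_cubes (s : Finset (Fin d → ℤ)) :
    volume (⋃ k ∈ s, cube d k) = s.card := by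
  rw [measure_biUnion_finset ?_ fun k _ => measurableSet_cube d k]
  · simp [volume_cube]
  · intro a _ b _ hab
    exact cube_disjoint d hab

noncomputable def Cvol : ℝ := Real.sqrt π ^ d / Real.Gamma ((d : ℝ) / 2 + 1)

lemma Cvol_nonneg (hd : 0 < d) : 0 ≤ Cvol d := by
  have h : 0 < Real.Gamma ((d : ℝ) / 2 + 1) := Real.Gamma_pos_of_pos (by positivity)
  exact div_nonneg (pow_nonneg (Real.sqrt_nonneg _) _) h.le

lemma volume_ball_set (hd : 0 < d) {s : ℝ} (hs : 0 ≤ s) :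
    volume {x : Fin d → ℝ | nrm d x ≤ s} = ENNReal.ofReal ((s ^ d) * Cvol d) := by
  have : Nonempty (Fin d) := ⟨⟨0, hd⟩⟩
  have key := MeasureTheory.volume_sum_rpow_le (ι := Fin d) (p := 2) one_le_two s
  have hset : {x : Fin d → ℝ | (∑ i, |x i| ^ (2:ℝ)) ^ ((1:ℝ) / 2) ≤ s}
      = {x : Fin d → ℝ | nrm d x ≤ s} := by
    ext x
    simp only [Set.mem_setOf_eq, Real.rpow_two, sq_abs, nrm]
    rw [← Real.sqrt_eq_rpow]
  rw [hset] at key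
  rw [key]
  have hgamma : 2 * Real.Gamma ((1:ℝ)/2 + 1) = Real.sqrt π := by
    rw [Real.Gamma_add_one (by norm_num), Real.Gamma_one_half_eq]
    ring
  rw [hgamma, Fintype.card_fin]
  rw [ENNReal.ofReal_mul (pow_nonneg hs d), ENNReal.ofReal_pow hs, Cvol]


lemma count_le (hd : 0 < d) {t : ℝ} (ht : 0 ≤ t) :
    ((cnt d t).card : ℝ) ≤ (Real.sqrt t + Real.sqrt d) ^ d * Cvol d := by
  have hsub : (⋃ k ∈ cnt d t, cube d k) ⊆ {x | nrm d x ≤ Real.sqrt t + Real.sqrt d} :=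
    Set.iUnion₂_subset fun k hk => cube_subset_ball d hk
  have hm := measure_mono (μ := (volume : Measure (Fin d → ℝ))) hsub
  rw [volume_cubes, volume_ball_set d hd (by positivity)] at hm
  rw [← ENNReal.ofReal_natCast] at hm
  exact (ENNReal.ofReal_le_ofReal_iff
    (mul_nonneg (by positivity) (Cvol_nonneg d hd))).1 hm

lemma le_count (hd : 0 < d) {t : ℝ} (ht : (d : ℝ) ≤ t) :
    (Real.sqrt t - Real.sqrt d) ^ d * Cvol d ≤ ((cnt d t).card : ℝ) := by
  have ht0 : (0:ℝ) ≤ t := le_trans (by positivity) ht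
  have hs : 0 ≤ Real.sqrt t - Real.sqrt d := sub_nonneg.2 (Real.sqrt_le_sqrt ht)
  have hsub := ball_subset_cubes d ht0
  have hm := measure_mono (μ := (volume : Measure (Fin d → ℝ))) hsub
  rw [volume_cubes, volume_ball_set d hd hs] at hm
  rw [← ENNReal.ofReal_natCast] at hm
  exact (ENNReal.ofReal_le_ofReal_iff (Nat.cast_nonneg _)).1 hm

lemma sqrt_pow_eq (T : ℝ) (hT : 0 ≤ T) : (Real.sqrt T) ^ d = T ^ ((d:ℝ)/2) := by
  rw [Real.sqrt_eq_rpow, ← Real.rpow_natCast (T ^ ((1:ℝ)/2)) d, ← Real.rpow_mul hT]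
  congr 1
  ring

lemma sqrt_tendsto_atTop : Tendsto Real.sqrt atTop atTop := by
  have h : Real.sqrt = fun x : ℝ => x ^ ((1:ℝ)/2) := funext Real.sqrt_eq_rpow
  rw [h]
  exact tendsto_rpow_atTop (by norm_num)

lemma count_tendsto (hd : 0 < d) :
    Tendsto (fun T : ℝ => ((cnt d T).card : ℝ) / T ^ ((d:ℝ)/2)) atTop (𝓝 (Cvol d)) := by
  have hratio : Tendsto (fun T : ℝ => Real.sqrt d / Real.sqrt T) atTop (𝓝 0) :=
    Tendsto.div_atTop tendsto_const_nhds sqrt_tendsto_atTop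
  have hL : Tendsto (fun T : ℝ => (1 - Real.sqrt d / Real.sqrt T) ^ d * Cvol d)
      atTop (𝓝 (Cvol d)) := by
    have h1 : Tendsto (fun T : ℝ => (1 - Real.sqrt d / Real.sqrt T) ^ d) atTop (𝓝 1) := by
      have := ((tendsto_const_nhds (x := (1:ℝ))).sub hratio).pow d
      simpa using this
    simpa using h1.mul_const (Cvol d)
  have hU : Tendsto (fun T : ℝ => (1 + Real.sqrt d / Real.sqrt T) ^ d * Cvol d)
      atTop (𝓝 (Cvol d)) := by
    have h1 : Tendsto (fun T : ℝ => (1 + Real.sqrt d / Real.sqrt T) ^ d) atTop (𝓝 1) := by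
      have := ((tendsto_const_nhds (x := (1:ℝ))).add hratio).pow d
      simpa using this
    simpa using h1.mul_const (Cvol d)
  refine tendsto_of_tendsto_of_tendsto_of_le_of_le' hL hU ?_ ?_
  · filter_upwards [eventually_ge_atTop (max (d:ℝ) 1)] with T hT
    have hT1 : (1:ℝ) ≤ T := le_trans (le_max_right _ _) hT
    have hTd : (d:ℝ) ≤ T := le_trans (le_max_left _ _) hT
    have hT0 : (0:ℝ) < T := lt_of_lt_of_le one_pos hT1
    have hsT : 0 < Real.sqrt T := Real.sqrt_pos.2 hT0
    have hpow : (0:ℝ) < Real.sqrt T ^ d := pow_pos hsT d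
    have key := le_count d hd hTd
    have heq : (1 - Real.sqrt d / Real.sqrt T) ^ d * Cvol d
        = ((Real.sqrt T - Real.sqrt d) ^ d * Cvol d) / Real.sqrt T ^ d := by
      rw [show (1 - Real.sqrt d / Real.sqrt T) = (Real.sqrt T - Real.sqrt d) / Real.sqrt T by
        field_simp, div_pow]
      ring
    calc (1 - Real.sqrt d / Real.sqrt T) ^ d * Cvol d
        = ((Real.sqrt T - Real.sqrt d) ^ d * Cvol d) / Real.sqrt T ^ d := heq
    _ ≤ ((cnt d T).card : ℝ) / Real.sqrt T ^ d := (div_le_div_iff_of_pos_right hpow).2 key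
    _ = ((cnt d T).card : ℝ) / T ^ ((d:ℝ)/2) := by rw [sqrt_pow_eq d T hT0.le]
  · filter_upwards [eventually_ge_atTop (max (d:ℝ) 1)] with T hT
    have hT1 : (1:ℝ) ≤ T := le_trans (le_max_right _ _) hT
    have hTd : (d:ℝ) ≤ T := le_trans (le_max_left _ _) hT
    have hT0 : (0:ℝ) < T := lt_of_lt_of_le one_pos hT1
    have hsT : 0 < Real.sqrt T := Real.sqrt_pos.2 hT0
    have hpow : (0:ℝ) < Real.sqrt T ^ d := pow_pos hsT d
    have key := count_le d hd hT0.le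
    have heq : (1 + Real.sqrt d / Real.sqrt T) ^ d * Cvol d
        = ((Real.sqrt T + Real.sqrt d) ^ d * Cvol d) / Real.sqrt T ^ d := by
      rw [show (1 + Real.sqrt d / Real.sqrt T) = (Real.sqrt T + Real.sqrt d) / Real.sqrt T by
        field_simp, div_pow]
      ring
    calc ((cnt d T).card : ℝ) / T ^ ((d:ℝ)/2)
        = ((cnt d T).card : ℝ) / Real.sqrt T ^ d := by rw [sqrt_pow_eq d T hT0.le]
    _ ≤ ((Real.sqrt T + Real.sqrt d) ^ d * Cvol d) / Real.sqrt T ^ d :=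
        (div_le_div_iff_of_pos_right hpow).2 key
    _ = (1 + Real.sqrt d / Real.sqrt T) ^ d * Cvol d := heq.symm


lemma count_tendsto_shift (hd : 0 < d) (a : ℝ) :
    Tendsto (fun T : ℝ => ((cnt d (T - a)).card : ℝ) * T ^ (-(d:ℝ)/2)) atTop (𝓝 (Cvol d)) := by
  have hsub : Tendsto (fun T : ℝ => T - a) atTop atTop :=
    tendsto_atTop_add_const_right atTop (-a) tendsto_id
  have h1 : Tendsto (fun T : ℝ => ((cnt d (T - a)).card : ℝ) / (T - a) ^ ((d:ℝ)/2))
      atTop (𝓝 (Cvol d)) := (count_tendsto d hd).comp hsub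
  have hbase : Tendsto (fun T : ℝ => (T - a) / T) atTop (𝓝 1) := by
    have h0 : Tendsto (fun T : ℝ => 1 - a / T) atTop (𝓝 1) := by
      have := (tendsto_const_nhds (x := (1:ℝ))).sub
        (Tendsto.div_atTop (tendsto_const_nhds (x := a)) tendsto_id)
      simpa using this
    refine Tendsto.congr' ?_ h0
    filter_upwards [eventually_ge_atTop (1:ℝ)] with T hT
    have : T ≠ 0 := by linarith
    field_simp
  have h2 : Tendsto (fun T : ℝ => ((T - a) / T) ^ ((d:ℝ)/2)) atTop (𝓝 1) := by
    have := hbase.rpow_const (p := (d:ℝ)/2) (Or.inl one_ne_zero)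
    simpa using this
  have h3 := h1.mul h2
  rw [mul_one] at h3
  refine Tendsto.congr' ?_ h3
  filter_upwards [eventually_ge_atTop (max (a + 1) 1)] with T hT
  have hTa : 0 < T - a := by have := le_trans (le_max_left (a+1) 1) hT; linarith
  have hT0 : 0 < T := lt_of_lt_of_le one_pos (le_trans (le_max_right (a+1) 1) hT)
  have hne1 : (T - a) ^ ((d:ℝ)/2) ≠ 0 := (Real.rpow_pos_of_pos hTa _).ne'
  have hne2 : T ^ ((d:ℝ)/2) ≠ 0 := (Real.rpow_pos_of_pos hT0 _).ne'
  rw [Real.div_rpow hTa.le hT0.le]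
  rw [show -(d:ℝ)/2 = -((d:ℝ)/2) by ring, Real.rpow_neg hT0.le]
  field_simp


lemma loginv_tendsto : Tendsto (fun N : ℕ => (Real.log N)⁻¹) atTop (𝓝 0) :=
  tendsto_inv_atTop_zero.comp (Real.tendsto_log_atTop.comp tendsto_natCast_atTop_atTop)

lemma Hsum (N : ℕ) : ∑ n ∈ Finset.Icc 1 N, (1:ℝ)/n = (harmonic N : ℝ) := by
  rw [harmonic_eq_sum_Icc]
  push_cast
  simp [one_div]

lemma harmonic_div_log :
    Tendsto (fun N : ℕ => (∑ n ∈ Finset.Icc 1 N, (1:ℝ)/n) / Real.log N) atTop (𝓝 1) := by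
  have hlow : Tendsto (fun N : ℕ => Real.log (N + 1) / Real.log N) atTop (𝓝 1) := by
    have hbase : Tendsto (fun N : ℕ =>
        1 + (Real.log (N + 1) - Real.log N) * (Real.log N)⁻¹) atTop (𝓝 1) := by
      have := (tendsto_const_nhds (x := (1:ℝ))).add
        (Real.tendsto_log_nat_add_one_sub_log.mul loginv_tendsto)
      simpa using this
    refine Tendsto.congr' ?_ hbase
    filter_upwards [eventually_ge_atTop 2] with N hN
    have hlog : Real.log N ≠ 0 :=
      (Real.log_pos (by exact_mod_cast Nat.lt_of_lt_of_le one_lt_two hN)).ne'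
    field_simp
    ring
  have hup : Tendsto (fun N : ℕ => (1 + Real.log N) / Real.log N) atTop (𝓝 1) := by
    have hbase : Tendsto (fun N : ℕ => (Real.log N)⁻¹ + 1) atTop (𝓝 1) := by
      have := loginv_tendsto.add (tendsto_const_nhds (x := (1:ℝ)))
      simpa using this
    refine Tendsto.congr' ?_ hbase
    filter_upwards [eventually_ge_atTop 2] with N hN
    have hlog : Real.log N ≠ 0 :=
      (Real.log_pos (by exact_mod_cast Nat.lt_of_lt_of_le one_lt_two hN)).ne'
    field_simp
  refine tendsto_of_tendsto_of_tendsto_of_le_of_le' hlow hup ?_ ?_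
  · filter_upwards [eventually_ge_atTop 2] with N hN
    have hlog : 0 < Real.log N :=
      Real.log_pos (by exact_mod_cast Nat.lt_of_lt_of_le one_lt_two hN)
    refine (div_le_div_iff_of_pos_right hlog).2 ?_
    rw [Hsum]
    have := log_add_one_le_harmonic N
    push_cast at this ⊢
    linarith
  · filter_upwards [eventually_ge_atTop 2] with N hN
    have hlog : 0 < Real.log N :=
      Real.log_pos (by exact_mod_cast Nat.lt_of_lt_of_le one_lt_two hN)
    refine (div_le_div_iff_of_pos_right hlog).2 ?_
    rw [Hsum]
    exact harmonic_le_one_add_log N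


lemma log_avg {v : ℕ → ℝ} (hv : Tendsto (fun n : ℕ => (n:ℝ) * v n) atTop (𝓝 0)) :
    Tendsto (fun N : ℕ => (∑ n ∈ Finset.range (N+1), v n) / Real.log N) atTop (𝓝 0) := by
  rw [NormedAddCommGroup.tendsto_nhds_zero]
  intro ε hε
  have hε4 : 0 < ε/4 := by linarith
  obtain ⟨n₀, hn₀⟩ := (Metric.tendsto_atTop.1 hv (ε/4) hε4)
  set m := max n₀ 1 with hm
  have hbound : ∀ n : ℕ, m ≤ n → |v n| ≤ ε/4 * (1/(n:ℝ)) := by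
    intro n hn
    have hn1 : 1 ≤ n := le_trans (le_max_right _ _) hn
    have hnpos : (0:ℝ) < n := by exact_mod_cast hn1
    have := hn₀ n (le_trans (le_max_left _ _) hn)
    rw [Real.dist_eq, sub_zero, abs_mul, abs_of_pos hnpos] at this
    rw [mul_one_div]
    rw [le_div_iff₀ hnpos]
    nlinarith [abs_nonneg (v n)]
  set K := ∑ n ∈ Finset.range m, |v n| with hK
  have hest : ∀ N : ℕ, m ≤ N → |∑ n ∈ Finset.range (N+1), v n|
      ≤ K + ε/4 * (1 + Real.log N) := by
    intro N hN
    have h1 : |∑ n ∈ Finset.range (N+1), v n| ≤ ∑ n ∈ Finset.range (N+1), |v n| :=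
      Finset.abs_sum_le_sum_abs _ _
    have hsplit : ∑ n ∈ Finset.range (N+1), |v n|
        = K + ∑ n ∈ Finset.Ico m (N+1), |v n| := by
      rw [Finset.range_eq_Ico,
        ← Finset.sum_Ico_consecutive _ (Nat.zero_le m) (by omega : m ≤ N + 1)]
      congr 1
      rw [hK, Finset.range_eq_Ico]
    have h2 : ∑ n ∈ Finset.Ico m (N+1), |v n| ≤ ε/4 * ∑ n ∈ Finset.Ico m (N+1), (1:ℝ)/n := by
      rw [Finset.mul_sum]
      refine Finset.sum_le_sum fun n hn => ?_
      have := hbound n (Finset.mem_Ico.1 hn).1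
      linarith [this]
    have h3 : ∑ n ∈ Finset.Ico m (N+1), (1:ℝ)/n ≤ ∑ n ∈ Finset.Icc 1 N, (1:ℝ)/n := by
      refine Finset.sum_le_sum_of_subset_of_nonneg ?_ fun n _ _ => by positivity
      intro n hn
      have := Finset.mem_Ico.1 hn
      refine Finset.mem_Icc.2 ⟨?_, by omega⟩
      have : 1 ≤ m := le_max_right _ _
      omega
    have h4 : ∑ n ∈ Finset.Icc 1 N, (1:ℝ)/n ≤ 1 + Real.log N := by
      rw [Hsum]; exact harmonic_le_one_add_log N
    have hεnn : (0:ℝ) ≤ ε/4 := hε4.le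
    calc |∑ n ∈ Finset.range (N+1), v n| ≤ K + ∑ n ∈ Finset.Ico m (N+1), |v n| := by
          rw [← hsplit]; exact h1
    _ ≤ K + ε/4 * ∑ n ∈ Finset.Ico m (N+1), (1:ℝ)/n := by linarith
    _ ≤ K + ε/4 * (1 + Real.log N) := by nlinarith
  have hR : Tendsto (fun N : ℕ => K * (Real.log N)⁻¹ + ε/4 * ((Real.log N)⁻¹ + 1))
      atTop (𝓝 (ε/4)) := by
    have := (loginv_tendsto.const_mul K).add
      ((loginv_tendsto.add (tendsto_const_nhds (x := (1:ℝ)))).const_mul (ε/4))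
    simpa using this
  have hRε : ∀ᶠ N : ℕ in atTop,
      K * (Real.log N)⁻¹ + ε/4 * ((Real.log N)⁻¹ + 1) < ε :=
    hR.eventually_lt_const (by linarith)
  filter_upwards [eventually_ge_atTop m, eventually_ge_atTop 2, hRε] with N h1 h2 h3
  have hlog : 0 < Real.log N :=
    Real.log_pos (by exact_mod_cast Nat.lt_of_lt_of_le one_lt_two h2)
  have hKnn : 0 ≤ K := Finset.sum_nonneg fun n _ => abs_nonneg _
  rw [Real.norm_eq_abs, abs_div, abs_of_pos hlog]
  have hdiv : |∑ n ∈ Finset.range (N+1), v n| / Real.log N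
      ≤ (K + ε/4 * (1 + Real.log N)) / Real.log N :=
    (div_le_div_iff_of_pos_right hlog).2 (hest N h1)
  have heq : (K + ε/4 * (1 + Real.log N)) / Real.log N
      = K * (Real.log N)⁻¹ + ε/4 * ((Real.log N)⁻¹ + 1) := by
    field_simp
  rw [heq] at hdiv
  exact lt_of_le_of_lt hdiv h3


end Stmt14

open Stmt14

/-- on the torus `T^d = ℝ^d/2πℤ^d`, the operator `(1+Δ)^{-d/2}` is
measurable with Dixmier trace `π^{d/2}/Γ(d/2+1)`.  Concretely: if `μ : ℕ → ℝ` is the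
sequence of eigenvalues `(1+|k|²)^{-d/2}`, `k ∈ ℤ^d`, (i.e. of singular values of
`(1+Δ)^{-d/2}`) arranged in decreasing order, then
`(1/log N) Σ_{n=0}^N μ_n → π^{d/2}/Γ(d/2+1)` as `N → ∞`. -/
theorem stmt14 (d : ℕ) (hd : 0 < d) (e : ℕ ≃ (Fin d → ℤ)) (μ : ℕ → ℝ)
    (hμ : ∀ n : ℕ, μ n = (1 + ∑ i, ((e n i : ℤ) : ℝ) ^ 2) ^ (-(d : ℝ) / 2))
    (hmono : Antitone μ) :
    Filter.Tendsto
      (fun N : ℕ => (∑ n ∈ Finset.range (N + 1), μ n) / Real.log N)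
      Filter.atTop
      (nhds (Real.pi ^ ((d : ℝ) / 2) / Real.Gamma ((d : ℝ) / 2 + 1))) := by
  classical
  set q : ℕ → ℝ := fun n => 1 + ∑ i, ((e n i : ℤ) : ℝ) ^ 2 with hq
  have hq1 : ∀ n, 1 ≤ q n := fun n =>
    le_add_of_nonneg_right (Finset.sum_nonneg fun i _ => sq_nonneg _)
  have hq0 : ∀ n, 0 < q n := fun n => lt_of_lt_of_le one_pos (hq1 n)
  have hμq : ∀ n, μ n = q n ^ (-(d : ℝ) / 2) := fun n => hμ n
  have hexp : (-(d:ℝ)/2) < 0 := by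
    have : (0:ℝ) < d := by exact_mod_cast hd
    linarith
  have hqmono : Monotone q := by
    intro a b hab
    by_contra hlt
    push_neg at hlt
    have h := Real.rpow_lt_rpow_of_neg (hq0 b) hlt hexp
    rw [← hμq a, ← hμq b] at h
    exact absurd (hmono hab) (not_le.2 h)
  have hiff : ∀ (T : ℝ) (n : ℕ), q n ≤ T ↔ n < (cnt d (T - 1)).card := by
    intro T n
    have hqm : ∀ m, q m ≤ T ↔ (∑ i, ((e m i : ℤ) : ℝ) ^ 2) ≤ T - 1 := by
      intro m
      simp only [hq]
      constructor <;> intro <;> linarith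
    set S : Finset ℕ := (cnt d (T - 1)).image e.symm with hS
    have hcard : S.card = (cnt d (T - 1)).card :=
      Finset.card_image_of_injective _ (Equiv.injective _)
    have hmem : ∀ m, m ∈ S ↔ q m ≤ T := by
      intro m
      rw [hS, Finset.mem_image]
      constructor
      · rintro ⟨k, hk, rfl⟩
        rw [hqm]
        simpa [Equiv.apply_symm_apply] using (mem_cnt d).1 hk
      · intro hm
        exact ⟨e m, (mem_cnt d).2 ((hqm m).1 hm), e.symm_apply_apply m⟩
    constructor
    · intro h
      rw [← hcard]
      have hsub : Finset.Iic n ⊆ S := fun m hm =>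
        (hmem m).2 (le_trans (hqmono (Finset.mem_Iic.1 hm)) h)
      have hcle := Finset.card_le_card hsub
      rw [Nat.card_Iic] at hcle
      omega
    · intro h
      by_contra hc
      push_neg at hc
      have hsub : S ⊆ Finset.Iio n := by
        intro m hm
        rw [Finset.mem_Iio]
        by_contra hmn
        push_neg at hmn
        exact absurd ((hmem m).1 hm) (not_le.2 (lt_of_lt_of_le hc (hqmono hmn)))
      have hcle := Finset.card_le_card hsub
      rw [Nat.card_Iio] at hcle
      omega
  have hqtop : Tendsto q atTop atTop := by
    rw [tendsto_atTop]
    intro b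
    filter_upwards [eventually_ge_atTop ((cnt d (b - 1)).card)] with n hn
    by_contra hb
    push_neg at hb
    have := (hiff b n).1 hb.le
    omega
  have hnμ : Tendsto (fun n : ℕ => (n : ℝ) * μ n) atTop (𝓝 (Cvol d)) := by
    have hlowlim : Tendsto
        (fun n : ℕ => ((cnt d (q n - 2)).card : ℝ) * q n ^ (-(d:ℝ)/2)) atTop (𝓝 (Cvol d)) := by
      have := (count_tendsto_shift d hd 2).comp hqtop
      exact this
    have hhighlim : Tendsto
        (fun n : ℕ => ((cnt d (q n - 1)).card : ℝ) * q n ^ (-(d:ℝ)/2)) atTop (𝓝 (Cvol d)) := by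
      have := (count_tendsto_shift d hd 1).comp hqtop
      exact this
    refine tendsto_of_tendsto_of_tendsto_of_le_of_le hlowlim hhighlim ?_ ?_
    · intro n
      have h1 : ¬ q n ≤ q n - 1 := by linarith
      have h2 : (cnt d (q n - 1 - 1)).card ≤ n := not_lt.1 (mt ((hiff (q n - 1) n)).2 h1)
      rw [show q n - 1 - 1 = q n - 2 by ring] at h2
      dsimp only
      rw [hμq n]
      exact mul_le_mul_of_nonneg_right (by exact_mod_cast h2)
        (Real.rpow_nonneg (hq0 n).le _)
    · intro n
      have h1 : n < (cnt d (q n - 1)).card := (hiff (q n) n).1 le_rfl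
      dsimp only
      rw [hμq n]
      exact mul_le_mul_of_nonneg_right (by exact_mod_cast h1.le)
        (Real.rpow_nonneg (hq0 n).le _)
  set C : ℝ := Real.pi ^ ((d : ℝ) / 2) / Real.Gamma ((d : ℝ) / 2 + 1) with hC
  have hCeq : Cvol d = C := by
    rw [Cvol, hC, sqrt_pow_eq d Real.pi Real.pi_pos.le]
  rw [hCeq] at hnμ
  set v : ℕ → ℝ := fun n => if n = 0 then 0 else μ n - C / n with hv
  have hvtend : Tendsto (fun n : ℕ => (n : ℝ) * v n) atTop (𝓝 0) := by
    have hbase : Tendsto (fun n : ℕ => (n : ℝ) * μ n - C) atTop (𝓝 0) := by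
      have := hnμ.sub (tendsto_const_nhds (x := C))
      simpa using this
    refine Tendsto.congr' ?_ hbase
    filter_upwards [eventually_ge_atTop 1] with n hn
    have hn0 : (n : ℝ) ≠ 0 := by
      have : 0 < n := hn
      positivity
    simp only [hv, if_neg (by omega : ¬ n = 0)]
    field_simp
  have hsum : ∀ N : ℕ, ∑ n ∈ Finset.range (N + 1), μ n
      = μ 0 + C * (∑ n ∈ Finset.Icc 1 N, (1:ℝ)/n) + ∑ n ∈ Finset.range (N + 1), v n := by
    intro N
    have hins : Finset.range (N + 1) = insert 0 (Finset.Icc 1 N) := by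
      ext x
      simp only [Finset.mem_range, Finset.mem_insert, Finset.mem_Icc]
      omega
    have h0 : (0:ℕ) ∉ Finset.Icc 1 N := by simp
    have hμsplit : ∑ n ∈ Finset.Icc 1 N, μ n
        = C * (∑ n ∈ Finset.Icc 1 N, (1:ℝ)/n) + ∑ n ∈ Finset.Icc 1 N, v n := by
      rw [Finset.mul_sum, ← Finset.sum_add_distrib]
      refine Finset.sum_congr rfl fun n hn => ?_
      have hn1 : 1 ≤ n := (Finset.mem_Icc.1 hn).1
      have hn0 : (n:ℝ) ≠ 0 := by
        have : 0 < n := hn1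
        positivity
      simp only [hv, if_neg (by omega : ¬ n = 0)]
      field_simp
      ring
    rw [hins, Finset.sum_insert h0, Finset.sum_insert h0, hμsplit]
    have hv0 : v 0 = 0 := by simp [hv]
    rw [hv0]
    ring
  have hfinal : Tendsto (fun N : ℕ => μ 0 * (Real.log N)⁻¹
      + C * ((∑ n ∈ Finset.Icc 1 N, (1:ℝ)/n) / Real.log N)
      + (∑ n ∈ Finset.range (N + 1), v n) / Real.log N) atTop (𝓝 C) := by
    have h1 := loginv_tendsto.const_mul (μ 0)
    have h2 := harmonic_div_log.const_mul C
    have h3 := log_avg hvtend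
    have := (h1.add h2).add h3
    simpa using this
  refine Tendsto.congr ?_ hfinal
  intro N
  rw [hsum N]
  rw [add_div, add_div]
  ring
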